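/- Let p be a prime, d ≥ 1, f a polynomial in d variables over ℤ_p, and n ∈ ℕ. Then the Haar measure of the set Y_{n,f} = {x ∈ ℤ_p^d : |f(x)|_p = p^{-n}} equals card(X_{n,f}) · p^{-(n+1)d}, where X_{n,f} is the image of Y_{n,f} in (ℤ_p/p^{n+1}ℤ_p)^d. -/

import Mathlib

open MeasureTheory MvPolynomial
open scoped ENNReal

/-- `Y_{n,f}`: the set of `x ∈ ℤ_p^d` with `|f(x)|_p = p^{-n}`. -/
def Yset (p : ℕ) [Fact p.Prime] {d : ℕ} (f : MvPolynomial (Fin d) ℤ_[p]) (n : ℕ) :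
    Set (Fin d → ℤ_[p]) :=
  {x | ‖MvPolynomial.eval x f‖ = (p : ℝ) ^ (-(n : ℤ))}

/-- `X_{n,f}`: the image of `Y_{n,f}` under coordinatewise reduction mod `p^{n+1}`. -/
def Xset (p : ℕ) [Fact p.Prime] {d : ℕ} (f : MvPolynomial (Fin d) ℤ_[p]) (n : ℕ) :
    Set (Fin d → ZMod (p ^ (n + 1))) :=
  (fun (x : Fin d → ℤ_[p]) (i : Fin d) => PadicInt.toZModPow (n + 1) (x i)) '' Yset p f n

section Aux

variable {p : ℕ} [Fact p.Prime]

lemma toZModPow_eq_iff' (m : ℕ) (z w : ℤ_[p]) :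
    PadicInt.toZModPow m z = PadicInt.toZModPow m w ↔ ‖z - w‖ ≤ (p : ℝ) ^ (-(m : ℤ)) := by
  rw [PadicInt.norm_le_pow_iff_mem_span_pow, ← PadicInt.ker_toZModPow, RingHom.mem_ker,
    map_sub, sub_eq_zero]

lemma norm_eq_of_sub_lt' {z w : ℤ_[p]} (h : ‖z - w‖ < ‖w‖) : ‖z‖ = ‖w‖ := by
  have h1 : ‖z‖ ≤ ‖w‖ := by
    calc ‖z‖ = ‖w + (z - w)‖ := by ring_nf
    _ ≤ max ‖w‖ ‖z - w‖ := PadicInt.nonarchimedean _ _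
    _ ≤ ‖w‖ := max_le le_rfl h.le
  rcases lt_or_eq_of_le h1 with h2 | h2
  · exfalso
    have : ‖w‖ ≤ max ‖z‖ ‖z - w‖ := by
      calc ‖w‖ = ‖z + -(z - w)‖ := by ring_nf
      _ ≤ max ‖z‖ ‖-(z-w)‖ := PadicInt.nonarchimedean _ _
      _ = max ‖z‖ ‖z - w‖ := by rw [norm_neg]
    exact lt_irrefl _ (this.trans_lt (max_lt h2 h))
  · exact h2

lemma eval_congr_toZModPow' {d m : ℕ} (f : MvPolynomial (Fin d) ℤ_[p]) {x y : Fin d → ℤ_[p]}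
    (h : ∀ i, PadicInt.toZModPow (p := p) m (x i) = PadicInt.toZModPow m (y i)) :
    PadicInt.toZModPow m (eval x f) = PadicInt.toZModPow m (eval y f) := by
  have hx : (PadicInt.toZModPow (p := p) m) (eval x f)
      = eval₂ ((PadicInt.toZModPow (p := p) m).comp (RingHom.id _))
        ((PadicInt.toZModPow (p := p) m) ∘ x) f := by
    rw [← eval₂_id (g := x), eval₂_comp_left]
  have hy : (PadicInt.toZModPow (p := p) m) (eval y f)
      = eval₂ ((PadicInt.toZModPow (p := p) m).comp (RingHom.id _))
        ((PadicInt.toZModPow (p := p) m) ∘ y) f := by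
    rw [← eval₂_id (g := y), eval₂_comp_left]
  rw [hx, hy]
  congr 1
  exact funext h

/-- membership in `Yset` only depends on the reduction mod `p^(n+1)`. -/
lemma mem_Yset_congr {d n : ℕ} (f : MvPolynomial (Fin d) ℤ_[p]) {x y : Fin d → ℤ_[p]}
    (h : ∀ i, PadicInt.toZModPow (p := p) (n + 1) (x i) = PadicInt.toZModPow (n + 1) (y i))
    (hy : y ∈ Yset p f n) : x ∈ Yset p f n := by
  have hev := eval_congr_toZModPow' (m := n + 1) f h
  have hsub : ‖eval x f - eval y f‖ ≤ (p : ℝ) ^ (-((n + 1 : ℕ) : ℤ)) :=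
    (toZModPow_eq_iff' _ _ _).mp hev
  have hpn : ((p : ℝ)) ^ (-((n + 1 : ℕ) : ℤ)) < (p : ℝ) ^ (-(n : ℤ)) := by
    have hp1 : (1 : ℝ) < (p : ℝ) := by
      exact_mod_cast (Fact.out (p := p.Prime)).one_lt
    apply zpow_lt_zpow_right₀ hp1
    push_cast; omega
  have hy' : ‖eval y f‖ = (p : ℝ) ^ (-(n : ℤ)) := hy
  have : ‖eval x f - eval y f‖ < ‖eval y f‖ := by
    rw [hy']; exact lt_of_le_of_lt hsub hpn
  show ‖eval x f‖ = (p : ℝ) ^ (-(n : ℤ))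
  rw [norm_eq_of_sub_lt' this, hy']

end Aux

/-- The Haar measure of `Y_{n,f} = {x ∈ ℤ_p^d : |f(x)|_p = p^{-n}}` equals
`card(X_{n,f}) · p^{-(n+1)d}`. -/
theorem haar_measure_Yset (p : ℕ) [Fact p.Prime] (d : ℕ) (hd : 1 ≤ d)
    (f : MvPolynomial (Fin d) ℤ_[p]) (n : ℕ)
    [MeasurableSpace ℤ_[p]] [BorelSpace ℤ_[p]]
    (μ : Measure (Fin d → ℤ_[p])) [μ.IsAddHaarMeasure] (hμ : μ Set.univ = 1) :
    μ (Yset p f n) = ((Xset p f n).ncard : ℝ≥0∞) * (p : ℝ≥0∞) ^ (-(((n + 1) * d : ℕ) : ℤ)) := by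
  haveI : NeZero (p ^ (n + 1)) :=
    ⟨pow_ne_zero _ (Fact.out (p := p.Prime)).ne_zero⟩
  set m := n + 1 with hm
  set red : (Fin d → ℤ_[p]) → (Fin d → ZMod (p ^ m)) :=
    fun x i => PadicInt.toZModPow m (x i) with hred
  -- the "kernel" set
  set K : Set (Fin d → ℤ_[p]) := red ⁻¹' {0} with hK
  have hKpi : K = Set.univ.pi (fun _ : Fin d => Metric.closedBall (0 : ℤ_[p])
      ((p : ℝ) ^ (-(m : ℤ)))) := by
    ext x
    simp only [hK, Set.mem_preimage, Set.mem_singleton_iff, funext_iff, Pi.zero_apply,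
      Set.mem_pi, Set.mem_univ, forall_true_left, Metric.mem_closedBall, dist_zero_right]
    refine forall_congr' fun i => ?_
    rw [show (0 : ZMod (p ^ m)) = PadicInt.toZModPow m (0 : ℤ_[p]) by simp,
      toZModPow_eq_iff', sub_zero, ← dist_zero_right, dist_zero_right]
  have hKmeas : MeasurableSet K := by
    rw [hKpi]
    exact MeasurableSet.univ_pi (fun i => measurableSet_closedBall)
  -- fibers of red are translates of K
  have hfiber_eq : ∀ c : Fin d → ℤ_[p],
      red ⁻¹' {red c} = (fun x => -c + x) ⁻¹' K := by
    intro c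
    ext x
    simp only [Set.mem_preimage, Set.mem_singleton_iff, funext_iff, hK, Pi.zero_apply,
      Pi.add_apply, Pi.neg_apply, hred]
    refine forall_congr' fun i => ?_
    rw [toZModPow_eq_iff', show (0 : ZMod (p ^ m)) = PadicInt.toZModPow m (0 : ℤ_[p]) by simp,
      toZModPow_eq_iff', sub_zero]
    constructor <;> intro h <;> [skip; skip] <;>
      · convert h using 2 <;> ring
  -- surjectivity: every z has a lift
  have hlift : ∀ z : Fin d → ZMod (p ^ m), red (fun i => ((z i).val : ℤ_[p])) = z := by
    intro z
    funext i
    rw [hred]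
    simp only
    rw [map_natCast, ZMod.natCast_zmod_val]
  have hfiber_meas : ∀ z : Fin d → ZMod (p ^ m), MeasurableSet (red ⁻¹' {z}) := by
    intro z
    have := hfiber_eq (fun i => ((z i).val : ℤ_[p]))
    rw [hlift] at this
    rw [this]
    exact hKmeas.preimage (measurable_const_add _)
  have hfiber_measure : ∀ z : Fin d → ZMod (p ^ m), μ (red ⁻¹' {z}) = μ K := by
    intro z
    have := hfiber_eq (fun i => ((z i).val : ℤ_[p]))
    rw [hlift] at this
    rw [this, measure_preimage_add]
  -- counting all fibers gives the measure of K
  have hcardN : Fintype.card (Fin d → ZMod (p ^ m)) = p ^ ((n + 1) * d) := by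
    rw [Fintype.card_fun, ZMod.card, Fintype.card_fin, ← pow_mul]
  have hdisj : Pairwise (Function.onFun Disjoint (fun z : Fin d → ZMod (p ^ m) =>
      red ⁻¹' {z})) := by
    intro a b hab
    exact Disjoint.preimage red (Set.disjoint_singleton.mpr hab)
  have huniv : Set.univ = ⋃ z : Fin d → ZMod (p ^ m), red ⁻¹' {z} := by
    ext x
    simp only [Set.mem_univ, true_iff, Set.mem_iUnion, Set.mem_preimage,
      Set.mem_singleton_iff]
    exact ⟨red x, rfl⟩
  have hsum : (1 : ℝ≥0∞) = (Fintype.card (Fin d → ZMod (p ^ m)) : ℝ≥0∞) * μ K := by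
    rw [← hμ, huniv, measure_iUnion hdisj hfiber_meas]
    rw [tsum_fintype]
    simp only [hfiber_measure]
    rw [Finset.sum_const, Finset.card_univ, nsmul_eq_mul]
  have hc0 : (Fintype.card (Fin d → ZMod (p ^ m)) : ℝ≥0∞) ≠ 0 :=
    Nat.cast_ne_zero.mpr Fintype.card_ne_zero
  have hctop : (Fintype.card (Fin d → ZMod (p ^ m)) : ℝ≥0∞) ≠ ⊤ :=
    ENNReal.natCast_ne_top _
  have hKval : μ K = (p : ℝ≥0∞) ^ (-(((n + 1) * d : ℕ) : ℤ)) := by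
    have hp0 : (p : ℝ≥0∞) ≠ 0 := by
      exact_mod_cast (Fact.out (p := p.Prime)).ne_zero
    have hptop : (p : ℝ≥0∞) ≠ ⊤ := ENNReal.natCast_ne_top _
    rw [ENNReal.zpow_neg, zpow_natCast]
    calc μ K = ((Fintype.card (Fin d → ZMod (p ^ m)) : ℝ≥0∞)⁻¹ *
          (Fintype.card (Fin d → ZMod (p ^ m)) : ℝ≥0∞)) * μ K := by
          rw [ENNReal.inv_mul_cancel hc0 hctop, one_mul]
    _ = (Fintype.card (Fin d → ZMod (p ^ m)) : ℝ≥0∞)⁻¹ *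
          ((Fintype.card (Fin d → ZMod (p ^ m)) : ℝ≥0∞) * μ K) := by rw [mul_assoc]
    _ = (Fintype.card (Fin d → ZMod (p ^ m)) : ℝ≥0∞)⁻¹ := by rw [← hsum, mul_one]
    _ = ((p : ℝ≥0∞) ^ ((n + 1) * d))⁻¹ := by rw [hcardN]; push_cast; rfl
  -- Y is the preimage of X
  have hYX : Yset p f n = red ⁻¹' (Xset p f n) := by
    ext x
    constructor
    · intro hx
      exact ⟨x, hx, rfl⟩
    · rintro ⟨y, hy, hxy⟩
      exact mem_Yset_congr f (fun i => (congrFun hxy i).symm) hy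
  have hXfin : (Xset p f n).Finite := Set.toFinite _
  have hXbU : red ⁻¹' (Xset p f n) = ⋃ z ∈ hXfin.toFinset, red ⁻¹' {z} := by
    rw [← Set.biUnion_preimage_singleton]
    apply Set.iUnion_congr
    intro z
    simp [Set.Finite.mem_toFinset]
  rw [hYX, hXbU, measure_biUnion_finset ?_ (fun z _ => hfiber_meas z)]
  · simp only [hfiber_measure]
    rw [Finset.sum_const, nsmul_eq_mul, hKval, Set.ncard_eq_toFinset_card _ hXfin]
  · exact fun a _ b _ hab => hdisj hab
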